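/- arXiv:1604.00952 — 4 statements merged into one kernel-verified Lean document; each statement's English description precedes it below -/
import Mathlib

section
/- Suppose H: [0,1] → ℝ is differentiable except possibly at s, its derivative equals (r(s,π)·E_max + u(π))·F̃(Q₁(π)) where F̃(Q₁(π)) > 0 for all π, and π ↦ r(s,π)E_max + u(π) is increasing on [0,s) and (s,1] with an upward jump at π = s. Then the set of global minimizers of H over [0,1] is: {π*_low} if s < π*_low; {π*_high} if s > π*_high; and {s} if π*_low ≤ s ≤ π*_high, where π*_low and π*_high are the boundary-adjusted roots of r₁(π)E_max + u(π) = 0 and r₂(π)E_max + u(π) = 0 respectively (r₁(π) = r(s,π) for π > s, r₂(π) = r(s,π) for π < s). -/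
open Set


lemma myAnti (H : ℝ → ℝ) (a b : ℝ)
    (hcont : ContinuousOn H (Icc a b))
    (hderiv : ∀ x ∈ Ioo a b, ∃ d, d < 0 ∧ HasDerivAt H d x) :
    StrictAntiOn H (Icc a b) := by
  apply strictAntiOn_of_deriv_neg (convex_Icc a b) hcont
  intro x hx
  rw [interior_Icc] at hx
  obtain ⟨d, hd, hH⟩ := hderiv x hx
  rw [hH.deriv]; exact hd

lemma myMono (H : ℝ → ℝ) (a b : ℝ)
    (hcont : ContinuousOn H (Icc a b))
    (hderiv : ∀ x ∈ Ioo a b, ∃ d, 0 < d ∧ HasDerivAt H d x) :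
    StrictMonoOn H (Icc a b) := by
  apply strictMonoOn_of_deriv_pos (convex_Icc a b) hcont
  intro x hx
  rw [interior_Icc] at hx
  obtain ⟨d, hd, hH⟩ := hderiv x hx
  rw [hH.deriv]; exact hd

lemma glueAnti (f : ℝ → ℝ) (a m b : ℝ) (ham : a ≤ m) (hmb : m ≤ b)
    (h1 : StrictAntiOn f (Icc a m)) (h2 : StrictAntiOn f (Icc m b)) :
    StrictAntiOn f (Icc a b) := by
  intro x hx y hy hxy
  rcases le_total y m with hym | hmy
  · exact h1 ⟨hx.1, hxy.le.trans hym⟩ ⟨hx.1.trans hxy.le, hym⟩ hxy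
  · rcases le_total x m with hxm | hmx
    · rcases eq_or_lt_of_le hxm with h | h
      · exact h2 ⟨h.ge, hx.2⟩ ⟨hmy, hy.2⟩ (h ▸ hxy)
      · calc f y ≤ f m := by
              rcases eq_or_lt_of_le hmy with h' | h'
              · exact (h' ▸ le_refl _)
              · exact (h2 ⟨le_refl m, hmb⟩ ⟨hmy, hy.2⟩ h').le
          _ < f x := h1 ⟨hx.1, hxm⟩ ⟨ham, le_refl m⟩ h
    · exact h2 ⟨hmx, hx.2⟩ ⟨hmx.trans hxy.le, hy.2⟩ hxy

lemma glueMono (f : ℝ → ℝ) (a m b : ℝ) (ham : a ≤ m) (hmb : m ≤ b)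
    (h1 : StrictMonoOn f (Icc a m)) (h2 : StrictMonoOn f (Icc m b)) :
    StrictMonoOn f (Icc a b) := by
  intro x hx y hy hxy
  rcases le_total y m with hym | hmy
  · exact h1 ⟨hx.1, hxy.le.trans hym⟩ ⟨hx.1.trans hxy.le, hym⟩ hxy
  · rcases le_total x m with hxm | hmx
    · rcases eq_or_lt_of_le hxm with h | h
      · exact h2 ⟨h.ge, hx.2⟩ ⟨hmy, hy.2⟩ (h ▸ hxy)
      · calc f x < f m := h1 ⟨hx.1, hxm⟩ ⟨ham, le_refl m⟩ h
          _ ≤ f y := by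
              rcases eq_or_lt_of_le hmy with h' | h'
              · exact (h' ▸ le_refl _)
              · exact (h2 ⟨le_refl m, hmb⟩ ⟨hmy, hy.2⟩ h').le
    · exact h2 ⟨hmx, hx.2⟩ ⟨hmx.trans hxy.le, hy.2⟩ hxy

lemma minset (H : ℝ → ℝ) (m : ℝ) (hm : m ∈ Icc (0:ℝ) 1)
    (hA : StrictAntiOn H (Icc 0 m)) (hM : StrictMonoOn H (Icc m 1)) :
    {π ∈ Icc (0:ℝ) 1 | ∀ π' ∈ Icc (0:ℝ) 1, H π ≤ H π'} = {m} := by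
  have key : ∀ π ∈ Icc (0:ℝ) 1, π ≠ m → H m < H π := by
    intro π hπ hne
    rcases lt_or_gt_of_ne hne with h | h
    · exact hA ⟨hπ.1, h.le⟩ ⟨hm.1, le_refl m⟩ h
    · exact hM ⟨le_refl m, hm.2⟩ ⟨h.le, hπ.2⟩ h
  ext π
  simp only [mem_setOf_eq, mem_singleton_iff]
  constructor
  · rintro ⟨hπ, hmin⟩
    by_contra hne
    exact absurd (hmin m hm) (not_le.mpr (key π hπ hne))
  · intro h
    refine ⟨h ▸ hm, fun π' hπ' => ?_⟩
    rcases eq_or_ne π' m with h' | h'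
    · rw [h, h']
    · rw [h]
      exact (key π' hπ' h').le

/-- Structural core of Theorem 1: if `H' π = (r(s,π)E_max + u(π))·F(π)` off `π = s` with
`F > 0`, where `r(s,·)E_max + u` is strictly increasing on either side of `s` with an upward
jump at `s`, then the global minimizers of `H` over `[0,1]` are exactly the projection of
`s` onto `[π*_low, π*_high]`. -/
theorem optimal_target_soc_projection
    (Emax : ℝ) (hEmax : 0 < Emax)
    (r₁ r₂ u : ℝ → ℝ) (s : ℝ) (hs : s ∈ Set.Icc (0:ℝ) 1)
    (hr₁cont : ContinuousOn r₁ (Set.Icc 0 1)) (hr₂cont : ContinuousOn r₂ (Set.Icc 0 1))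
    (hucont : ContinuousOn u (Set.Icc 0 1))
    (h₁mono : StrictMonoOn (fun π => r₁ π * Emax + u π) (Set.Icc 0 1))
    (h₂mono : StrictMonoOn (fun π => r₂ π * Emax + u π) (Set.Icc 0 1))
    (hgap : ∀ π ∈ Set.Icc (0:ℝ) 1, r₂ π < r₁ π)
    (r : ℝ → ℝ)
    (hr_hi : ∀ π, s < π → r π = r₁ π)
    (hr_lo : ∀ π, π < s → r π = r₂ π)
    (F : ℝ → ℝ) (hF : ∀ π ∈ Set.Icc (0:ℝ) 1, 0 < F π)
    (H : ℝ → ℝ) (hHcont : ContinuousOn H (Set.Icc 0 1))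
    (hH' : ∀ π ∈ Set.Icc (0:ℝ) 1, π ≠ s →
      HasDerivAt H ((r π * Emax + u π) * F π) π)
    (πlow πhigh : ℝ)
    (hlow_mem : πlow ∈ Set.Icc (0:ℝ) 1) (hhigh_mem : πhigh ∈ Set.Icc (0:ℝ) 1)
    (hlow : r₁ πlow * Emax + u πlow = 0 ∨
      (πlow = 0 ∧ 0 < r₁ 0 * Emax + u 0) ∨ (πlow = 1 ∧ r₁ 1 * Emax + u 1 < 0))
    (hhigh : r₂ πhigh * Emax + u πhigh = 0 ∨
      (πhigh = 0 ∧ 0 < r₂ 0 * Emax + u 0) ∨ (πhigh = 1 ∧ r₂ 1 * Emax + u 1 < 0)) :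
    (s < πlow → {π ∈ Set.Icc (0:ℝ) 1 | ∀ π' ∈ Set.Icc (0:ℝ) 1, H π ≤ H π'} = {πlow}) ∧
    (πhigh < s → {π ∈ Set.Icc (0:ℝ) 1 | ∀ π' ∈ Set.Icc (0:ℝ) 1, H π ≤ H π'} = {πhigh}) ∧
    (πlow ≤ s → s ≤ πhigh →
      {π ∈ Set.Icc (0:ℝ) 1 | ∀ π' ∈ Set.Icc (0:ℝ) 1, H π ≤ H π'} = {s}) := by
  have hgap' : ∀ x ∈ Set.Icc (0:ℝ) 1, r₂ x * Emax + u x < r₁ x * Emax + u x := by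
    intro x hx
    have := hgap x hx
    nlinarith
  have f1low : ∀ x ∈ Set.Icc (0:ℝ) 1, x < πlow → r₁ x * Emax + u x < 0 := by
    intro x hx hxl
    rcases hlow with h | ⟨h0, _⟩ | ⟨h1, hneg⟩
    · have := h₁mono hx hlow_mem hxl
      simp only at this
      linarith
    · exact absurd (h0 ▸ hxl) (not_lt.mpr hx.1)
    · have := h₁mono hx hlow_mem hxl
      simp only at this
      rw [h1] at this
      linarith
  have f2low : ∀ x ∈ Set.Icc (0:ℝ) 1, πlow < x → 0 < r₁ x * Emax + u x := by
    intro x hx hxl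
    rcases hlow with h | ⟨h0, hpos⟩ | ⟨h1, _⟩
    · have := h₁mono hlow_mem hx hxl
      simp only at this
      linarith
    · have := h₁mono hlow_mem hx hxl
      simp only at this
      rw [h0] at this
      linarith
    · exact absurd (h1 ▸ hxl) (not_lt.mpr hx.2)
  have f1high : ∀ x ∈ Set.Icc (0:ℝ) 1, x < πhigh → r₂ x * Emax + u x < 0 := by
    intro x hx hxl
    rcases hhigh with h | ⟨h0, _⟩ | ⟨h1, hneg⟩
    · have := h₂mono hx hhigh_mem hxl
      simp only at this
      linarith
    · exact absurd (h0 ▸ hxl) (not_lt.mpr hx.1)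
    · have := h₂mono hx hhigh_mem hxl
      simp only at this
      rw [h1] at this
      linarith
  have f2high : ∀ x ∈ Set.Icc (0:ℝ) 1, πhigh < x → 0 < r₂ x * Emax + u x := by
    intro x hx hxl
    rcases hhigh with h | ⟨h0, hpos⟩ | ⟨h1, _⟩
    · have := h₂mono hhigh_mem hx hxl
      simp only at this
      linarith
    · have := h₂mono hhigh_mem hx hxl
      simp only at this
      rw [h0] at this
      linarith
    · exact absurd (h1 ▸ hxl) (not_lt.mpr hx.2)
  refine ⟨?_, ?_, ?_⟩
  · -- Case s < πlow
    intro hc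
    have A1 : StrictAntiOn H (Icc 0 s) := by
      apply myAnti H 0 s (hHcont.mono (Icc_subset_Icc le_rfl hs.2))
      intro x hx
      have hxI : x ∈ Set.Icc (0:ℝ) 1 := ⟨hx.1.le, hx.2.le.trans hs.2⟩
      refine ⟨_, ?_, hH' x hxI hx.2.ne⟩
      rw [hr_lo x hx.2]
      exact mul_neg_of_neg_of_pos
        ((hgap' x hxI).trans (f1low x hxI (hx.2.trans hc))) (hF x hxI)
    have A2 : StrictAntiOn H (Icc s πlow) := by
      apply myAnti H s πlow (hHcont.mono (Icc_subset_Icc hs.1 hlow_mem.2))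
      intro x hx
      have hxI : x ∈ Set.Icc (0:ℝ) 1 := ⟨hs.1.trans hx.1.le, hx.2.le.trans hlow_mem.2⟩
      refine ⟨_, ?_, hH' x hxI hx.1.ne'⟩
      rw [hr_hi x hx.1]
      exact mul_neg_of_neg_of_pos (f1low x hxI hx.2) (hF x hxI)
    have M : StrictMonoOn H (Icc πlow 1) := by
      apply myMono H πlow 1 (hHcont.mono (Icc_subset_Icc hlow_mem.1 le_rfl))
      intro x hx
      have hxI : x ∈ Set.Icc (0:ℝ) 1 := ⟨hlow_mem.1.trans hx.1.le, hx.2.le⟩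
      refine ⟨_, ?_, hH' x hxI (hc.trans hx.1).ne'⟩
      rw [hr_hi x (hc.trans hx.1)]
      exact mul_pos (f2low x hxI hx.1) (hF x hxI)
    exact minset H πlow hlow_mem (glueAnti H 0 s πlow hs.1 hc.le A1 A2) M
  · -- Case πhigh < s
    intro hc
    have A : StrictAntiOn H (Icc 0 πhigh) := by
      apply myAnti H 0 πhigh (hHcont.mono (Icc_subset_Icc le_rfl hhigh_mem.2))
      intro x hx
      have hxI : x ∈ Set.Icc (0:ℝ) 1 := ⟨hx.1.le, hx.2.le.trans hhigh_mem.2⟩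
      refine ⟨_, ?_, hH' x hxI (hx.2.trans hc).ne⟩
      rw [hr_lo x (hx.2.trans hc)]
      exact mul_neg_of_neg_of_pos (f1high x hxI hx.2) (hF x hxI)
    have M1 : StrictMonoOn H (Icc πhigh s) := by
      apply myMono H πhigh s (hHcont.mono (Icc_subset_Icc hhigh_mem.1 hs.2))
      intro x hx
      have hxI : x ∈ Set.Icc (0:ℝ) 1 := ⟨hhigh_mem.1.trans hx.1.le, hx.2.le.trans hs.2⟩
      refine ⟨_, ?_, hH' x hxI hx.2.ne⟩
      rw [hr_lo x hx.2]
      exact mul_pos (f2high x hxI hx.1) (hF x hxI)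
    have M2 : StrictMonoOn H (Icc s 1) := by
      apply myMono H s 1 (hHcont.mono (Icc_subset_Icc hs.1 le_rfl))
      intro x hx
      have hxI : x ∈ Set.Icc (0:ℝ) 1 := ⟨hs.1.trans hx.1.le, hx.2.le⟩
      refine ⟨_, ?_, hH' x hxI hx.1.ne'⟩
      rw [hr_hi x hx.1]
      exact mul_pos ((f2high x hxI (hc.trans hx.1)).trans (hgap' x hxI)) (hF x hxI)
    exact minset H πhigh hhigh_mem A (glueMono H πhigh s 1 hc.le hs.2 M1 M2)
  · -- Case πlow ≤ s ≤ πhigh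
    intro h1 h2
    have A : StrictAntiOn H (Icc 0 s) := by
      apply myAnti H 0 s (hHcont.mono (Icc_subset_Icc le_rfl hs.2))
      intro x hx
      have hxI : x ∈ Set.Icc (0:ℝ) 1 := ⟨hx.1.le, hx.2.le.trans hs.2⟩
      refine ⟨_, ?_, hH' x hxI hx.2.ne⟩
      rw [hr_lo x hx.2]
      exact mul_neg_of_neg_of_pos (f1high x hxI (hx.2.trans_le h2)) (hF x hxI)
    have M : StrictMonoOn H (Icc s 1) := by
      apply myMono H s 1 (hHcont.mono (Icc_subset_Icc hs.1 le_rfl))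
      intro x hx
      have hxI : x ∈ Set.Icc (0:ℝ) 1 := ⟨hs.1.trans hx.1.le, hx.2.le⟩
      refine ⟨_, ?_, hH' x hxI hx.1.ne'⟩
      rw [hr_hi x hx.1]
      exact mul_pos (f2low x hxI (h1.trans_lt hx.1)) (hF x hxI)
    exact minset H s hs A M
end

section
/- Let h(s,π) = E_I[cost_e(s,π)] where cost_e(s,π) = (c_e/η)·min(P_max·I, (π−s)E_max) if s < π, equals −c_e η·min(P_max·I, (s−π)E_max) if s > π, and 0 if s = π, with I a nonnegative random variable with density f_I. Then for π > s, ∂h/∂π = (c_e E_max/η)·F̃_I((π−s)E_max/P_max), and for π < s, ∂h/∂π = c_e η E_max·F̃_I((s−π)E_max/P_max), where F̃_I is the complementary CDF of I. In particular h(s,·) is not differentiable at π = s unless η = 1 or c_e = 0. -/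
open Set MeasureTheory

/-- Splitting the expectation of `min (Pmax * i) q` against the density over `Ici 0`. -/
lemma aux_split_expected_cost (Pmax : ℝ) (hPmax : 0 < Pmax)
    (fI : ℝ → ℝ)
    (hfI_int : IntegrableOn fI (Set.Ici 0))
    (hfI_moment : IntegrableOn (fun x => x * fI x) (Set.Ici 0))
    (q : ℝ) (hq : 0 ≤ q) :
    (∫ i in Set.Ici (0:ℝ), min (Pmax * i) q * fI i)
      = Pmax * (∫ x in (0:ℝ)..(q / Pmax), x * fI x)
        + q * (∫ x in Set.Ioi (q / Pmax), fI x) := by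
  set c := q / Pmax with hc
  have hc0 : 0 ≤ c := div_nonneg hq hPmax.le
  have hsplit : Icc (0:ℝ) c ∪ Ioi c = Ici 0 := Icc_union_Ioi_eq_Ici hc0
  have hdisj : Disjoint (Icc (0:ℝ) c) (Ioi c) :=
    (Iic_disjoint_Ioi le_rfl).mono_left Icc_subset_Iic_self
  have heq1 : EqOn (fun i => Pmax * (i * fI i)) (fun i => min (Pmax * i) q * fI i)
      (Icc (0:ℝ) c) := by
    intro i hi
    have : Pmax * i ≤ q := by
      rw [hc] at hi
      have := hi.2
      calc Pmax * i ≤ Pmax * (q / Pmax) := by nlinarith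
        _ = q := by field_simp
    simp only [min_eq_left this]
    ring
  have heq2 : EqOn (fun i => q * fI i) (fun i => min (Pmax * i) q * fI i) (Ioi c) := by
    intro i hi
    have : q ≤ Pmax * i := by
      have hic : c < i := hi
      calc q = Pmax * c := by rw [hc]; field_simp
        _ ≤ Pmax * i := by nlinarith
    simp only [min_eq_right this]
  have hint1 : IntegrableOn (fun i => min (Pmax * i) q * fI i) (Icc (0:ℝ) c) := by
    refine IntegrableOn.congr_fun ?_ heq1 measurableSet_Icc
    exact ((hfI_moment.mono_set (Icc_subset_Ici_self)).const_mul Pmax)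
  have hint2 : IntegrableOn (fun i => min (Pmax * i) q * fI i) (Ioi c) := by
    refine IntegrableOn.congr_fun ?_ heq2 measurableSet_Ioi
    exact ((hfI_int.mono_set (fun x hx => le_trans hc0 (le_of_lt hx))).const_mul q)
  rw [← hsplit, setIntegral_union hdisj measurableSet_Ioi hint1 hint2]
  have e1 : (∫ i in Icc (0:ℝ) c, min (Pmax * i) q * fI i)
      = Pmax * ∫ x in (0:ℝ)..c, x * fI x := by
    rw [← setIntegral_congr_fun measurableSet_Icc heq1,
      intervalIntegral.integral_of_le hc0, ← integral_Icc_eq_integral_Ioc]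
    exact integral_const_mul Pmax _
  have e2 : (∫ i in Ioi c, min (Pmax * i) q * fI i) = q * ∫ x in Ioi c, fI x := by
    rw [← setIntegral_congr_fun measurableSet_Ioi heq2]
    exact integral_const_mul q _
  rw [e1, e2]

/-- Equation (17) of the paper: derivative of the expected charging cost in the target
SoC `π`, and non-differentiability at `π = s` unless `η = 1` or `c_e = 0`. -/
theorem expected_charging_cost_derivative
    (ce η Emax Pmax : ℝ)
    (hce : 0 ≤ ce) (hη : η ∈ Set.Ioc (0:ℝ) 1) (hEmax : 0 < Emax) (hPmax : 0 < Pmax)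
    (fI : ℝ → ℝ) (hfI_nonneg : ∀ x, 0 ≤ fI x) (hfI_cont : Continuous fI)
    (hfI_int : IntegrableOn fI (Set.Ici 0))
    (hfI_moment : IntegrableOn (fun x => x * fI x) (Set.Ici 0))
    (FtilI : ℝ → ℝ)
    (hFtilI : ∀ t, FtilI t = ∫ x in Set.Ioi t, fI x)
    (hFpos : ∀ t, 0 < FtilI t)
    (costE : ℝ → ℝ → ℝ → ℝ)
    (hcostE : ∀ s π i, costE s π i =
      if s < π then (ce / η) * min (Pmax * i) ((π - s) * Emax)
      else if π < s then -(ce * η) * min (Pmax * i) ((s - π) * Emax)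
      else 0)
    (h : ℝ → ℝ → ℝ)
    (hh : ∀ s π, h s π = ∫ i in Set.Ici (0:ℝ), costE s π i * fI i)
    (s : ℝ) (hs : s ∈ Set.Icc (0:ℝ) 1) :
    (∀ π, s < π →
      HasDerivAt (fun p => h s p)
        ((ce * Emax / η) * FtilI ((π - s) * Emax / Pmax)) π) ∧
    (∀ π, π < s →
      HasDerivAt (fun p => h s p)
        (ce * η * Emax * FtilI ((s - π) * Emax / Pmax)) π) ∧
    (η < 1 → 0 < ce → ¬ DifferentiableAt ℝ (fun p => h s p) s) := by
  obtain ⟨hη0, hη1⟩ := hη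
  -- fI is integrable on every Ioi t
  have hIoi : ∀ t : ℝ, IntegrableOn fI (Set.Ioi t) := by
    intro t
    by_contra hn
    have h0 := integral_undef hn
    have := hFpos t
    rw [hFtilI t, h0] at this
    exact lt_irrefl 0 this
  -- FtilI as antiderivative
  have hFeq : ∀ t : ℝ, FtilI t = FtilI 0 - ∫ x in (0:ℝ)..t, fI x := by
    have key : ∀ a b : ℝ, a ≤ b → FtilI a = FtilI b + ∫ x in Set.Ioc a b, fI x := by
      intro a b hab
      have hu : Ioc a b ∪ Ioi b = Ioi a := Ioc_union_Ioi_eq_Ioi hab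
      have h1 : IntegrableOn fI (Ioc a b) := (hIoi a).mono_set Ioc_subset_Ioi_self
      have h2 : IntegrableOn fI (Ioi b) := hIoi b
      have := setIntegral_union Ioc_disjoint_Ioi_same measurableSet_Ioi h1 h2
      rw [hu] at this
      rw [hFtilI a, hFtilI b, this]; ring
    intro t
    rcases le_total 0 t with ht | ht
    · have := key 0 t ht
      rw [intervalIntegral.integral_of_le ht]
      linarith
    · have := key t 0 ht
      rw [intervalIntegral.integral_of_ge ht]
      linarith
  -- derivative of FtilI
  have hFd : ∀ t : ℝ, HasDerivAt FtilI (-(fI t)) t := by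
    intro t
    have hK : HasDerivAt (fun u => ∫ x in (0:ℝ)..u, fI x) (fI t) t :=
      intervalIntegral.integral_hasDerivAt_right (hfI_cont.intervalIntegrable _ _)
        (hfI_cont.stronglyMeasurable.stronglyMeasurableAtFilter)
        hfI_cont.continuousAt
    exact (hK.const_sub _).congr_of_eventuallyEq (Filter.Eventually.of_forall hFeq)
  -- the moment antiderivative
  set J : ℝ → ℝ := fun t => ∫ x in (0:ℝ)..t, x * fI x with hJdef
  have hJd : ∀ t : ℝ, HasDerivAt J (t * fI t) t := by
    intro t
    exact intervalIntegral.integral_hasDerivAt_right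
      ((continuous_id.mul hfI_cont).intervalIntegrable _ _)
      ((continuous_id.mul hfI_cont).stronglyMeasurable.stronglyMeasurableAtFilter)
      (continuous_id.mul hfI_cont).continuousAt
  -- the master function Ψ
  set Ψ : ℝ → ℝ := fun q => Pmax * J (q / Pmax) + q * FtilI (q / Pmax) with hΨdef
  have hΨd : ∀ q : ℝ, HasDerivAt Ψ (FtilI (q / Pmax)) q := by
    intro q
    have hinner : HasDerivAt (fun u : ℝ => u / Pmax) (1 / Pmax) q := by
      simpa using (hasDerivAt_id q).div_const Pmax
    have hJc : HasDerivAt (fun u : ℝ => J (u / Pmax))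
        ((q / Pmax * fI (q / Pmax)) * (1 / Pmax)) q := by
      have := (hJd (q / Pmax)).comp q hinner; exact this
    have hFc : HasDerivAt (fun u : ℝ => FtilI (u / Pmax))
        (-(fI (q / Pmax)) * (1 / Pmax)) q :=
      (hFd (q / Pmax)).comp q hinner
    have hmul : HasDerivAt (fun u : ℝ => u * FtilI (u / Pmax))
        (1 * FtilI (q / Pmax) + q * (-(fI (q / Pmax)) * (1 / Pmax))) q :=
      (hasDerivAt_id q).mul hFc
    have := (hJc.const_mul Pmax).add hmul
    refine this.congr_deriv ?_
    field_simp
    ring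
  have hΨ0 : Ψ 0 = 0 := by
    simp [hΨdef, hJdef]
  -- the expected cost in terms of Ψ
  have hR : ∀ p, s ≤ p → h s p = (ce / η) * Ψ ((p - s) * Emax) := by
    intro p hp
    rcases eq_or_lt_of_le hp with rfl | hlt
    · rw [hh]
      simp only [hcostE, lt_irrefl, if_false, zero_mul, integral_zero, sub_self,
        zero_mul, hΨ0, mul_zero]
    · have hq : 0 ≤ (p - s) * Emax := by nlinarith
      rw [hh]
      simp only [hcostE, if_pos hlt, mul_assoc]
      rw [integral_const_mul]
      congr 1
      rw [aux_split_expected_cost Pmax hPmax fI hfI_int hfI_moment _ hq]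
      rw [hΨdef]
      simp only [hJdef]
      rw [hFtilI]
  have hL : ∀ p, p ≤ s → h s p = -(ce * η) * Ψ ((s - p) * Emax) := by
    intro p hp
    rcases eq_or_lt_of_le hp with rfl | hlt
    · rw [hh]
      simp only [hcostE, lt_irrefl, if_false, zero_mul, integral_zero, sub_self,
        zero_mul, hΨ0, mul_zero]
    · have hq : 0 ≤ (s - p) * Emax := by nlinarith
      rw [hh]
      simp only [hcostE, if_neg (not_lt.mpr hp), if_pos hlt, mul_assoc]
      rw [integral_const_mul]
      congr 1
      rw [aux_split_expected_cost Pmax hPmax fI hfI_int hfI_moment _ hq]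
      rw [hΨdef]
      simp only [hJdef]
      rw [hFtilI]
  -- derivative of the right model function at any point
  have hRd : ∀ p : ℝ, HasDerivAt (fun u => (ce / η) * Ψ ((u - s) * Emax))
      ((ce * Emax / η) * FtilI ((p - s) * Emax / Pmax)) p := by
    intro p
    have hinner : HasDerivAt (fun u : ℝ => (u - s) * Emax) Emax p := by
      simpa using ((hasDerivAt_id p).sub_const s).mul_const Emax
    have := ((hΨd ((p - s) * Emax)).comp p hinner).const_mul (ce / η)
    refine this.congr_deriv ?_
    ring
  have hLd : ∀ p : ℝ, HasDerivAt (fun u => -(ce * η) * Ψ ((s - u) * Emax))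
      (ce * η * Emax * FtilI ((s - p) * Emax / Pmax)) p := by
    intro p
    have hinner : HasDerivAt (fun u : ℝ => (s - u) * Emax) (-Emax) p := by
      have := ((hasDerivAt_id p).const_sub s).mul_const Emax
      simpa using this
    have := ((hΨd ((s - p) * Emax)).comp p hinner).const_mul (-(ce * η))
    refine this.congr_deriv ?_
    ring
  refine ⟨?_, ?_, ?_⟩
  · intro π hπ
    refine (hRd π).congr_of_eventuallyEq ?_
    filter_upwards [Ioi_mem_nhds hπ] with p hp
    exact hR p (le_of_lt hp)
  · intro π hπ
    refine (hLd π).congr_of_eventuallyEq ?_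
    filter_upwards [Iio_mem_nhds hπ] with p hp
    exact hL p (le_of_lt hp)
  · intro hη1' hce' hdiff
    have hd := hdiff.hasDerivAt
    have hA : HasDerivWithinAt (fun p => h s p)
        ((ce * Emax / η) * FtilI ((s - s) * Emax / Pmax)) (Ici s) s := by
      refine ((hRd s).hasDerivWithinAt).congr ?_ (hR s le_rfl)
      intro p hp
      exact hR p hp
    have hB : HasDerivWithinAt (fun p => h s p)
        (ce * η * Emax * FtilI ((s - s) * Emax / Pmax)) (Iic s) s := by
      refine ((hLd s).hasDerivWithinAt).congr ?_ (hL s le_rfl)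
      intro p hp
      exact hL p hp
    have e1 : deriv (fun p => h s p) s
        = (ce * Emax / η) * FtilI ((s - s) * Emax / Pmax) := by
      rw [← (hd.hasDerivWithinAt (s := Ici s)).derivWithin
          (uniqueDiffOn_Ici s s Set.self_mem_Ici)]
      exact hA.derivWithin (uniqueDiffOn_Ici s s Set.self_mem_Ici)
    have e2 : deriv (fun p => h s p) s
        = ce * η * Emax * FtilI ((s - s) * Emax / Pmax) := by
      rw [← (hd.hasDerivWithinAt (s := Iic s)).derivWithin
          (uniqueDiffOn_Iic s s Set.self_mem_Iic)]
      exact hB.derivWithin (uniqueDiffOn_Iic s s Set.self_mem_Iic)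
    have hF0 : 0 < FtilI ((s - s) * Emax / Pmax) := hFpos _
    have heq : (ce * Emax / η) * FtilI ((s - s) * Emax / Pmax)
        = ce * η * Emax * FtilI ((s - s) * Emax / Pmax) := by
      rw [← e1, ← e2]
    have hmul : ce * Emax * FtilI ((s - s) * Emax / Pmax)
        = η * (η * (ce * Emax * FtilI ((s - s) * Emax / Pmax))) := by
      field_simp at heq ⊢
      nlinarith [heq]
    have hpos : 0 < ce * Emax * FtilI ((s - s) * Emax / Pmax) :=
      mul_pos (mul_pos hce' hEmax) hF0
    have hηη : (0:ℝ) < 1 - η * η := by nlinarith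
    nlinarith [mul_pos hηη hpos]
end

section
/- Let the state transition be s' = clamp(s + sgn(π−s)·min(P_max·i/E_max, |π−s|) + κ·e/E_max, 0, 1) with κ ∈ {η, −1/η}, i, e ≥ 0, P_max, E_max > 0, η ∈ (0,1], and policy π being the projection of s onto a fixed interval [a,b] ⊆ [0,1]. Then the transition map s ↦ s' is nondecreasing in s for each fixed (i, e, κ). -/
open Set

/-- `sign x * min c |x|` is the clamp of `x` to `[-c, c]` when `0 ≤ c`. -/
lemma sign_mul_min_abs (c x : ℝ) (hc : 0 ≤ c) :
    Real.sign x * min c |x| = max (-c) (min c x) := by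
  rcases lt_trichotomy x 0 with hx | hx | hx
  · rw [Real.sign_of_neg hx, abs_of_neg hx]
    rcases le_total c (-x) with h | h
    · rw [min_eq_left h, min_eq_right (by linarith), max_eq_left (by linarith)]
      ring
    · rw [min_eq_right h, min_eq_right (by linarith), max_eq_right (by linarith)]
      ring
  · simp [hx, Real.sign_zero, min_eq_right hc, max_eq_right (by linarith : -c ≤ (0:ℝ))]
  · rw [Real.sign_of_pos hx, abs_of_pos hx, one_mul,
      max_eq_right (le_min hc hx.le |>.trans' (by linarith))]

/-- clamp is monotone. -/
lemma clamp_mono (c u v : ℝ) (h : v ≤ u) :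
    max (-c) (min c v) ≤ max (-c) (min c u) :=
  max_le_max le_rfl (min_le_min le_rfl h)

/-- clamp is 1-Lipschitz (one-sided version). -/
lemma clamp_lip (c u v : ℝ) (h : v ≤ u) :
    max (-c) (min c u) - max (-c) (min c v) ≤ u - v := by
  rcases le_total c u with h1 | h1 <;> rcases le_total c v with h2 | h2 <;>
    rcases le_total (-c) u with h3 | h3 <;> rcases le_total (-c) v with h4 | h4 <;>
    simp [min_def, max_def] <;> split_ifs <;> linarith

/-- Monotonicity of the clamped state transition under the projection (threshold) policy:
for fixed disturbances `(i, e)` and sign `κ ∈ {η, −1/η}`, the next state is a nondecreasing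
function of the current state. -/
theorem transition_monotone_in_state
    (a b Pmax Emax η κ i e : ℝ)
    (ha : 0 ≤ a) (hab : a ≤ b) (hb : b ≤ 1)
    (hPmax : 0 < Pmax) (hEmax : 0 < Emax) (hη : η ∈ Set.Ioc (0:ℝ) 1)
    (hκ : κ = η ∨ κ = -(1/η))
    (hi : 0 ≤ i) (he : 0 ≤ e) :
    Monotone (fun s : ℝ =>
      min (max (s
        + Real.sign (min (max s a) b - s)
            * min (Pmax * i / Emax) |min (max s a) b - s|
        + κ * e / Emax) 0) 1) := by
  intro s t hst
  set c := Pmax * i / Emax with hc_def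
  have hc : 0 ≤ c := by positivity
  simp only
  rw [sign_mul_min_abs c _ hc, sign_mul_min_abs c _ hc]
  apply min_le_min _ le_rfl
  apply max_le_max _ le_rfl
  have hπmono : min (max s a) b ≤ min (max t a) b :=
    min_le_min (max_le_max hst le_rfl) le_rfl
  have hπlip : min (max t a) b - min (max s a) b ≤ t - s := by
    rcases le_total s a with h1 | h1 <;> rcases le_total t a with h2 | h2 <;>
      rcases le_total (max s a) b with h3 | h3 <;> rcases le_total (max t a) b with h4 | h4 <;>
      simp [min_def, max_def] <;> split_ifs <;> linarith
  set u := min (max s a) b - s with hu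
  set v := min (max t a) b - t with hv
  have hvu : v ≤ u := by simp only [hu, hv]; linarith
  have hlip := clamp_lip c u v hvu
  linarith
end

section
/- Let h*(s) = min_{π∈[0,1]} h(s,π) where h(s,π) is differentiable in E_max with ∂h/∂E_max given by (1_{π≥s}/η − 1_{π<s}·η)c_e|π−s|F̃_I(Q₁) − (c_p p₁(1−π)/η)F̃_E(E_max(1−π)/η)F̃_I(Q₁) − c_p p₋₁ η π F̃_E(η E_max π)F̃_I(Q₁), and the interior optimality condition r(s,π) = 0 relates the first term to the penalty terms: (1_{π≥s}/η − 1_{π<s}η)c_e = −(c_p p₁/η)F̃_E(E_max(1−π)/η) + c_p p₋₁ η F̃_E(η E_max π). Then substituting the optimality condition yields ∂h*/∂E_max = −(1_{π≥s}/η + 1_{π<s}η)c_e s F̃_I(Q₁) − (c_p p₁/η)F̃_E(E_max(1−π)/η)F̃_I(Q₁) ≤ 0, i.e., the minimized single-stage cost is nonincreasing in the battery capacity E_max. -/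
open Set

/-- Envelope computation of Appendix C (equations (29)–(31)): substituting the interior
optimality condition `r(s,π) = 0` into `∂h/∂E_max` yields a manifestly nonpositive
expression, so the minimized single-stage cost is nonincreasing in the capacity. -/
theorem single_stage_cost_derivative_nonpositive
    (ce cp η p₁ pm1 s π Emax Pmax : ℝ)
    (hce : 0 ≤ ce) (hcp : 0 ≤ cp) (hη : η ∈ Set.Ioc (0:ℝ) 1)
    (hp₁ : 0 ≤ p₁) (hpm1 : 0 ≤ pm1)
    (hs : s ∈ Set.Icc (0:ℝ) 1) (hπ : π ∈ Set.Icc (0:ℝ) 1)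
    (hEmax : 0 < Emax) (hPmax : 0 < Pmax)
    (FtilI FtilE : ℝ → ℝ)
    (hFI : ∀ t, FtilI t ∈ Set.Icc (0:ℝ) 1) (hFE : ∀ t, FtilE t ∈ Set.Icc (0:ℝ) 1)
    (Q₁ : ℝ) (hQ₁ : Q₁ = |π - s| * Emax / Pmax)
    -- interior optimality condition r(s,π) = 0:
    (hopt : (if s ≤ π then 1/η else η) * ce
        + (cp * p₁ / η) * FtilE (Emax * (1 - π) / η)
        - cp * pm1 * η * FtilE (η * Emax * π) = 0) :
    ((if s ≤ π then 1/η else -η) * ce * |π - s| * FtilI Q₁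
      - (cp * p₁ * (1 - π) / η) * FtilE (Emax * (1 - π) / η) * FtilI Q₁
      - cp * pm1 * η * π * FtilE (η * Emax * π) * FtilI Q₁
      = -((if s ≤ π then 1/η else η)) * ce * s * FtilI Q₁
        - (cp * p₁ / η) * FtilE (Emax * (1 - π) / η) * FtilI Q₁) ∧
    ((if s ≤ π then 1/η else -η) * ce * |π - s| * FtilI Q₁
      - (cp * p₁ * (1 - π) / η) * FtilE (Emax * (1 - π) / η) * FtilI Q₁
      - cp * pm1 * η * π * FtilE (η * Emax * π) * FtilI Q₁ ≤ 0) := by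
  obtain ⟨hη0, hη1⟩ := hη
  obtain ⟨hF0, hF1⟩ := hFI Q₁
  obtain ⟨hA0, hA1⟩ := hFE (Emax * (1 - π) / η)
  obtain ⟨hB0, hB1⟩ := hFE (η * Emax * π)
  have heq : ((if s ≤ π then 1/η else -η) * ce * |π - s| * FtilI Q₁
      - (cp * p₁ * (1 - π) / η) * FtilE (Emax * (1 - π) / η) * FtilI Q₁
      - cp * pm1 * η * π * FtilE (η * Emax * π) * FtilI Q₁
      = -((if s ≤ π then 1/η else η)) * ce * s * FtilI Q₁
        - (cp * p₁ / η) * FtilE (Emax * (1 - π) / η) * FtilI Q₁) := by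
    by_cases h : s ≤ π
    · simp only [h, if_true] at hopt ⊢
      rw [abs_of_nonneg (by linarith)]
      linear_combination (π * FtilI Q₁) * hopt
    · simp only [h, if_false] at hopt ⊢
      rw [abs_of_nonpos (by linarith)]
      linear_combination (π * FtilI Q₁) * hopt
  refine ⟨heq, heq ▸ ?_⟩
  have hk : 0 ≤ (if s ≤ π then 1/η else η) := by positivity
  have h1 : 0 ≤ (if s ≤ π then 1/η else η) * ce * s * FtilI Q₁ := by
    have := hs.1; positivity
  have h2 : 0 ≤ (cp * p₁ / η) * FtilE (Emax * (1 - π) / η) * FtilI Q₁ := by positivity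
  linarith
end
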